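/- Let B ∈ S^n. Then J_0(B) ⊆ CP^n if and only if every x ∈ ℝ^n with xᵀ·B·x = 0 satisfies x ∈ ℝ^n_+ ∪ (−ℝ^n_+); moreover, either condition implies J_0(B) ⊆ DN^n. -/

import Mathlib

open Matrix

noncomputable section

/-- The completely positive cone `CP^n`. -/
def CP (n : ℕ) : Set (Matrix (Fin n) (Fin n) ℝ) :=
  convexHull ℝ {X | ∃ x : Fin n → ℝ, 0 ≤ x ∧ X = vecMulVec x x}

/-- The doubly nonnegative cone `DN^n = S^n_+ ∩ N^n`. -/
def DN (n : ℕ) : Set (Matrix (Fin n) (Fin n) ℝ) :=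
  {X | X.PosSemidef ∧ ∀ i j, 0 ≤ X i j}

namespace Stmt10Aux

open scoped Pointwise

variable {n : ℕ}

/-- The quadratic form of `B`. -/
def qf (B : Matrix (Fin n) (Fin n) ℝ) (v : Fin n → ℝ) : ℝ :=
  dotProduct v (B.mulVec v)

lemma trace_outer (B : Matrix (Fin n) (Fin n) ℝ) (v : Fin n → ℝ) :
    (B * vecMulVec v v).trace = qf B v := by
  unfold qf
  simp only [Matrix.trace, Matrix.diag, Matrix.mul_apply, vecMulVec_apply,
    dotProduct, Matrix.mulVec, Finset.mul_sum]
  exact Finset.sum_congr rfl fun i _ => Finset.sum_congr rfl fun j _ => by ring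

lemma qf_combo (B : Matrix (Fin n) (Fin n) ℝ) (v w : Fin n → ℝ) (s t : ℝ) :
    qf B (s • v + t • w) =
      s ^ 2 * qf B v + s * t * (dotProduct v (B.mulVec w) +
        dotProduct w (B.mulVec v)) + t ^ 2 * qf B w := by
  unfold qf
  simp only [Matrix.mulVec_add, Matrix.mulVec_smul, dotProduct_add,
    add_dotProduct, smul_dotProduct, dotProduct_smul, smul_eq_mul]
  ring

lemma rot (a b c : ℝ) (ha : 0 < a) (hc : c < 0) :
    ∃ s t : ℝ, s ^ 2 + t ^ 2 = 1 ∧ a * s ^ 2 + b * (s * t) + c * t ^ 2 = 0 := by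
  have hdisc : 0 ≤ b ^ 2 - 4 * a * c := by nlinarith
  set d : ℝ := Real.sqrt (b ^ 2 - 4 * a * c) with hd
  have hd2 : d ^ 2 = b ^ 2 - 4 * a * c := Real.sq_sqrt hdisc
  set r : ℝ := (-b + d) / (2 * a) with hr
  have hroot : a * r ^ 2 + b * r + c = 0 := by
    have ha' : (2 * a) ≠ 0 := by positivity
    rw [hr]
    field_simp
    nlinarith [hd2]
  have h1 : (0 : ℝ) < 1 + r ^ 2 := by positivity
  set u : ℝ := 1 / Real.sqrt (1 + r ^ 2) with hu
  have hs2 : Real.sqrt (1 + r ^ 2) ^ 2 = 1 + r ^ 2 := Real.sq_sqrt h1.le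
  have hsne : Real.sqrt (1 + r ^ 2) ≠ 0 := by
    positivity
  have hu2 : u ^ 2 * (1 + r ^ 2) = 1 := by
    rw [hu, div_pow, one_pow, hs2]
    field_simp
  refine ⟨r * u, u, by nlinarith [hu2], by nlinarith [hu2, hroot]⟩

lemma pair_rot (B : Matrix (Fin n) (Fin n) ℝ) (v w : Fin n → ℝ)
    (hv : 0 < qf B v) (hw : qf B w < 0) :
    ∃ v' w' : Fin n → ℝ, qf B v' = 0 ∧
      vecMulVec v' v' + vecMulVec w' w' = vecMulVec v v + vecMulVec w w := by
  obtain ⟨s, t, hst, hzero⟩ :=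
    rot (qf B v) (dotProduct v (B.mulVec w) + dotProduct w (B.mulVec v))
      (qf B w) hv hw
  refine ⟨s • v + t • w, (-t) • v + s • w, ?_, ?_⟩
  · rw [qf_combo]; linarith [hzero]
  · ext i j
    simp only [Matrix.add_apply, vecMulVec_apply, Pi.add_apply, Pi.smul_apply, smul_eq_mul]
    linear_combination (v i * v j + w i * w j) * hst

/-- Sum of outer products of a multiset of vectors. -/
def SM (m : Multiset (Fin n → ℝ)) : Matrix (Fin n) (Fin n) ℝ :=
  (m.map fun v => vecMulVec v v).sum

/-- Sum of quadratic-form values. -/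
def QM (B : Matrix (Fin n) (Fin n) ℝ) (m : Multiset (Fin n → ℝ)) : ℝ :=
  (m.map (qf B)).sum

@[simp] lemma SM_zero : SM (0 : Multiset (Fin n → ℝ)) = 0 := rfl

@[simp] lemma SM_cons (a : Fin n → ℝ) (m : Multiset (Fin n → ℝ)) :
    SM (a ::ₘ m) = vecMulVec a a + SM m := by
  simp [SM]

@[simp] lemma QM_zero (B : Matrix (Fin n) (Fin n) ℝ) : QM B (0 : Multiset (Fin n → ℝ)) = 0 := rfl

@[simp] lemma QM_cons (B : Matrix (Fin n) (Fin n) ℝ) (a : Fin n → ℝ)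
    (m : Multiset (Fin n → ℝ)) : QM B (a ::ₘ m) = qf B a + QM B m := by
  simp [QM]

lemma trace_SM (B : Matrix (Fin n) (Fin n) ℝ) (m : Multiset (Fin n → ℝ)) :
    (B * SM m).trace = QM B m := by
  induction m using Multiset.induction_on with
  | empty => simp
  | cons a m ih =>
    rw [SM_cons, QM_cons, mul_add, trace_add, trace_outer, ih]

lemma QM_erase (B : Matrix (Fin n) (Fin n) ℝ) {m : Multiset (Fin n → ℝ)}
    {a : Fin n → ℝ} (ha : a ∈ m) : QM B m = qf B a + QM B (m.erase a) := by
  conv_lhs => rw [← Multiset.cons_erase ha]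
  rw [QM_cons]

lemma exists_neg_of_sum_neg (B : Matrix (Fin n) (Fin n) ℝ) {m : Multiset (Fin n → ℝ)}
    (h : QM B m < 0) : ∃ b ∈ m, qf B b < 0 := by
  by_contra hcon
  push_neg at hcon
  have : 0 ≤ QM B m := by
    refine Multiset.sum_nonneg fun x hx => ?_
    obtain ⟨b, hb, rfl⟩ := Multiset.mem_map.mp hx
    exact hcon b hb
  linarith

lemma exists_pos_of_sum_pos (B : Matrix (Fin n) (Fin n) ℝ) {m : Multiset (Fin n → ℝ)}
    (h : 0 < QM B m) : ∃ b ∈ m, 0 < qf B b := by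
  by_contra hcon
  push_neg at hcon
  have : 0 ≤ (m.map fun b => -qf B b).sum := by
    refine Multiset.sum_nonneg fun x hx => ?_
    obtain ⟨b, hb, rfl⟩ := Multiset.mem_map.mp hx
    simpa using hcon b hb
  have h2 : (m.map fun b => -qf B b).sum = -QM B m := by
    unfold QM
    rw [← Multiset.sum_map_neg', Multiset.map_map]
    rfl
  rw [h2] at this
  linarith

open Classical in
/-- Key lemma: a multiset decomposition with total `B`-energy zero can be replaced
by one in which every vector has zero `B`-energy. -/
lemma purify (B : Matrix (Fin n) (Fin n) ℝ) :
    ∀ k : ℕ, ∀ m : Multiset (Fin n → ℝ),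
      Multiset.card (m.filter fun v => qf B v ≠ 0) ≤ k → QM B m = 0 →
      ∃ m' : Multiset (Fin n → ℝ), SM m' = SM m ∧ ∀ v ∈ m', qf B v = 0 := by
  intro k
  induction k with
  | zero =>
    intro m hcard _
    refine ⟨m, rfl, fun v hv => ?_⟩
    by_contra hne
    have : v ∈ m.filter fun v => qf B v ≠ 0 := Multiset.mem_filter.mpr ⟨hv, hne⟩
    have := Multiset.card_pos_iff_exists_mem.mpr ⟨v, this⟩
    omega
  | succ k ih =>
    intro m hcard hQ
    by_cases hall : ∀ v ∈ m, qf B v = 0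
    · exact ⟨m, rfl, hall⟩
    push_neg at hall
    obtain ⟨a, ham, hane⟩ := hall
    -- find a positive and a negative element
    obtain ⟨u, w, hum, hwm, hupos, hwneg⟩ :
        ∃ u w : Fin n → ℝ, u ∈ m ∧ w ∈ m.erase u ∧ 0 < qf B u ∧ qf B w < 0 := by
      rcases lt_or_gt_of_ne hane with hneg | hpos
      · have hrest : 0 < QM B (m.erase a) := by
          have := QM_erase B ham
          linarith
        obtain ⟨b, hb, hbpos⟩ := exists_pos_of_sum_pos B hrest
        have hbm : b ∈ m := Multiset.mem_of_mem_erase hb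
        have hab : a ≠ b := fun h => by rw [h] at hneg; linarith
        have haeb : a ∈ m.erase b := (Multiset.mem_erase_of_ne hab).mpr ham
        exact ⟨b, a, hbm, haeb, hbpos, hneg⟩
      · have hrest : QM B (m.erase a) < 0 := by
          have := QM_erase B ham
          linarith
        obtain ⟨b, hb, hbneg⟩ := exists_neg_of_sum_neg B hrest
        exact ⟨a, b, ham, hb, hpos, hbneg⟩
    set rest : Multiset (Fin n → ℝ) := (m.erase u).erase w with hrest_def
    have hm_eq : m = u ::ₘ w ::ₘ rest := by
      rw [hrest_def, Multiset.cons_erase hwm, Multiset.cons_erase hum]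
    obtain ⟨v', w', hv'0, houter⟩ := pair_rot B u w hupos hwneg
    set m' : Multiset (Fin n → ℝ) := v' ::ₘ w' ::ₘ rest with hm'_def
    have hSM : SM m' = SM m := by
      rw [hm'_def, hm_eq, SM_cons, SM_cons, SM_cons, SM_cons, ← add_assoc, ← add_assoc,
        houter]
    have hQM : QM B m' = 0 := by
      rw [← trace_SM, hSM, trace_SM]
      exact hQ
    have hcard' : Multiset.card (m'.filter fun v => qf B v ≠ 0) ≤ k := by
      have hfm : Multiset.card (m.filter fun v => qf B v ≠ 0) =
          2 + Multiset.card (rest.filter fun v => qf B v ≠ 0) := by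
        rw [hm_eq, Multiset.filter_cons_of_pos _ (by exact hupos.ne'),
          Multiset.filter_cons_of_pos _ (by exact hwneg.ne)]
        simp only [Multiset.card_cons]
        omega
      have hfm' : Multiset.card (m'.filter fun v => qf B v ≠ 0) ≤
          1 + Multiset.card (rest.filter fun v => qf B v ≠ 0) := by
        rw [hm'_def, Multiset.filter_cons_of_neg _ (by simp [hv'0])]
        by_cases hw' : qf B w' ≠ 0
        · rw [Multiset.filter_cons_of_pos _ (by exact hw')]
          simp only [Multiset.card_cons]
          omega
        · rw [Multiset.filter_cons_of_neg _ (by exact hw')]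
          omega
      omega
    obtain ⟨m'', hSM'', hall''⟩ := ih m' hcard' hQM
    exact ⟨m'', by rw [hSM'', hSM], hall''⟩

/-- The generating set of `CP n`. -/
def G (n : ℕ) : Set (Matrix (Fin n) (Fin n) ℝ) :=
  {X | ∃ x : Fin n → ℝ, 0 ≤ x ∧ X = vecMulVec x x}

lemma zero_mem_G : (0 : Matrix (Fin n) (Fin n) ℝ) ∈ G n :=
  ⟨0, le_refl _, by ext i j; simp [vecMulVec_apply]⟩

lemma smul_mem_hull {c : ℝ} (hc : 0 ≤ c) {X : Matrix (Fin n) (Fin n) ℝ}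
    (hX : X ∈ convexHull ℝ (G n)) : c • X ∈ convexHull ℝ (G n) := by
  have hsub : c • G n ⊆ G n := by
    rintro Y ⟨X', ⟨x, hx, rfl⟩, rfl⟩
    refine ⟨Real.sqrt c • x, fun i => by
      simpa using mul_nonneg (Real.sqrt_nonneg c) (hx i), ?_⟩
    ext i j
    simp only [Matrix.smul_apply, vecMulVec_apply, Pi.smul_apply, smul_eq_mul]
    have h := Real.sq_sqrt hc
    rw [show Real.sqrt c * x i * (Real.sqrt c * x j) = Real.sqrt c ^ 2 * (x i * x j) by ring,
      h]
  have : c • X ∈ c • convexHull ℝ (G n) := Set.smul_mem_smul_set hX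
  rw [← convexHull_smul] at this
  exact convexHull_mono hsub this

lemma add_mem_hull {X Y : Matrix (Fin n) (Fin n) ℝ}
    (hX : X ∈ convexHull ℝ (G n)) (hY : Y ∈ convexHull ℝ (G n)) :
    X + Y ∈ convexHull ℝ (G n) := by
  have hmid : (1 / 2 : ℝ) • X + (1 / 2 : ℝ) • Y ∈ convexHull ℝ (G n) :=
    (convex_convexHull ℝ (G n)) hX hY (by norm_num) (by norm_num) (by norm_num)
  have h2 : (2 : ℝ) • ((1 / 2 : ℝ) • X + (1 / 2 : ℝ) • Y) ∈ convexHull ℝ (G n) :=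
    smul_mem_hull (by norm_num) hmid
  rwa [smul_add, smul_smul, smul_smul, show (2 : ℝ) * (1 / 2) = 1 by norm_num,
    one_smul, one_smul] at h2

lemma vecMulVec_neg_neg (v : Fin n → ℝ) : vecMulVec (-v) (-v) = vecMulVec v v := by
  ext i j
  simp [vecMulVec_apply]

lemma outer_mem_G {v : Fin n → ℝ} (h : 0 ≤ v ∨ v ≤ 0) : vecMulVec v v ∈ G n := by
  rcases h with h | h
  · exact ⟨v, h, rfl⟩
  · exact ⟨-v, fun i => by simpa using h i, (vecMulVec_neg_neg v).symm⟩

lemma SM_mem_hull {m : Multiset (Fin n → ℝ)}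
    (h : ∀ v ∈ m, (0 : Fin n → ℝ) ≤ v ∨ v ≤ 0) : SM m ∈ convexHull ℝ (G n) := by
  induction m using Multiset.induction_on with
  | empty => exact subset_convexHull ℝ (G n) zero_mem_G
  | cons a m ih =>
    rw [SM_cons]
    exact add_mem_hull
      (subset_convexHull ℝ (G n) (outer_mem_G (h a (Multiset.mem_cons_self a m))))
      (ih fun v hv => h v (Multiset.mem_cons_of_mem hv))

lemma psd_smul {c : ℝ} (hc : 0 ≤ c) {X : Matrix (Fin n) (Fin n) ℝ}
    (hX : X.PosSemidef) : (c • X).PosSemidef := by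
  refine .of_dotProduct_mulVec_nonneg ?_ fun y => ?_
  · have := hX.1
    unfold Matrix.IsHermitian at this ⊢
    rw [conjTranspose_smul, this]
    simp
  · rw [smul_mulVec, dotProduct_smul]
    exact mul_nonneg hc (hX.dotProduct_mulVec_nonneg y)

lemma outer_posSemidef (x : Fin n → ℝ) : (vecMulVec x x).PosSemidef := by
  refine .of_dotProduct_mulVec_nonneg ?_ fun y => ?_
  · show (vecMulVec x x)ᴴ = vecMulVec x x
    ext i j
    simp [conjTranspose_apply, vecMulVec_apply, mul_comm]
  · have : dotProduct (star y) ((vecMulVec x x).mulVec y) =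
        (dotProduct x y) * (dotProduct x y) := by
      simp only [dotProduct, Matrix.mulVec, vecMulVec_apply, star_trivial,
        Finset.mul_sum, Finset.sum_mul]
      rw [Finset.sum_comm]
      exact Finset.sum_congr rfl fun i _ => Finset.sum_congr rfl fun j _ => by ring
    rw [this]
    exact mul_self_nonneg _

lemma CP_subset_DN : CP n ⊆ DN n := by
  refine convexHull_min ?_ ?_
  · rintro X ⟨x, hx, rfl⟩
    exact ⟨outer_posSemidef x, fun i j => by
      rw [vecMulVec_apply]; exact mul_nonneg (hx i) (hx j)⟩
  · intro X hX Y hY a b ha hb hab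
    refine ⟨(psd_smul ha hX.1).add (psd_smul hb hY.1), fun i j => ?_⟩
    simp only [Matrix.add_apply, Matrix.smul_apply, smul_eq_mul]
    exact add_nonneg (mul_nonneg ha (hX.2 i j)) (mul_nonneg hb (hY.2 i j))

end Stmt10Aux

open Stmt10Aux in
/-- part of Lemma 5.2. -/
theorem stmt_10 (n : ℕ) (B : Matrix (Fin n) (Fin n) ℝ) (hBsym : B.IsSymm) :
    ({X | X.PosSemidef ∧ (B * X).trace = 0} ⊆ CP n ↔
      ∀ x : Fin n → ℝ, dotProduct x (B.mulVec x) = 0 → (0 ≤ x ∨ x ≤ 0)) ∧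
    (({X : Matrix (Fin n) (Fin n) ℝ | X.PosSemidef ∧ (B * X).trace = 0} ⊆ CP n) →
      {X | X.PosSemidef ∧ (B * X).trace = 0} ⊆ DN n) := by
  classical
  constructor
  · constructor
    · -- forward direction
      intro h x hx
      have hXmem : vecMulVec x x ∈ {X | X.PosSemidef ∧ (B * X).trace = 0} :=
        ⟨outer_posSemidef x, by rw [trace_outer]; exact hx⟩
      have hCP : vecMulVec x x ∈ CP n := h hXmem
      have hDN : vecMulVec x x ∈ DN n := CP_subset_DN hCP
      have hentries : ∀ i j, 0 ≤ x i * x j := fun i j => by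
        have := hDN.2 i j
        rwa [vecMulVec_apply] at this
      by_cases h0 : 0 ≤ x
      · exact Or.inl h0
      · right
        rw [Pi.le_def] at h0
        push_neg at h0
        obtain ⟨i, hi⟩ := h0
        simp only [Pi.zero_apply] at hi
        intro j
        simp only [Pi.zero_apply]
        nlinarith [hentries i j]
    · -- backward direction
      intro h X hX
      obtain ⟨hpsd, htr⟩ := hX
      obtain ⟨A, hA⟩ : ∃ A : Matrix (Fin n) (Fin n) ℝ, X = Aᴴ * A := by
        open MatrixOrder in exact CStarAlgebra.nonneg_iff_eq_star_mul_self.mp hpsd.nonneg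
      set m₀ : Multiset (Fin n → ℝ) :=
        (Finset.univ.val : Multiset (Fin n)).map (fun i => (fun j => A i j)) with hm₀
      have hXSM : SM m₀ = X := by
        rw [hm₀]
        unfold SM
        rw [Multiset.map_map]
        have : ((Finset.univ.val : Multiset (Fin n)).map
            ((fun v => vecMulVec v v) ∘ fun i => fun j => A i j)).sum =
            ∑ i : Fin n, vecMulVec (fun j => A i j) (fun j => A i j) := rfl
        rw [this, hA]
        ext j k
        rw [Matrix.sum_apply]
        simp only [vecMulVec_apply, Matrix.mul_apply, conjTranspose_apply, star_trivial]
      have hQM0 : QM B m₀ = 0 := by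
        rw [← trace_SM, hXSM]; exact htr
      obtain ⟨m', hSM', hall'⟩ := purify B (Multiset.card
        (m₀.filter fun v => qf B v ≠ 0)) m₀ le_rfl hQM0
      have : SM m' ∈ convexHull ℝ (G n) :=
        SM_mem_hull fun v hv => h v (hall' v hv)
      rw [hSM', hXSM] at this
      exact this
  · -- second part: J₀ ⊆ CP → J₀ ⊆ DN
    intro h X hX
    exact CP_subset_DN (h hX)
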